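/- Let p, q be coprime positive integers, let x₀, y₀ be nonzero reals and φₓ, φ_y reals, and set φ₀ = (qφₓ − pφ_y)/π. The Lissajous curve x(τ) = x₀ sin(2πpτ + φₓ), y(τ) = y₀ sin(2πqτ + φ_y) passes through the origin (i.e., there exists τ ∈ ℝ with x(τ) = 0 and y(τ) = 0) if and only if φ₀ is an integer. -/

import Mathlib

open Real

/-- The Lissajous curve `τ ↦ (x₀ sin(2πpτ + φx), y₀ sin(2πqτ + φy))` with coprime
positive frequencies `p, q` and nonzero amplitudes passes through the origin iff
`φ₀ = (q·φx - p·φy)/π` is an integer. -/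
theorem lissajous_through_origin_iff (p q : ℕ) (hp : 0 < p) (hq : 0 < q)
    (hpq : Nat.Coprime p q) (x₀ y₀ φx φy φ₀ : ℝ) (hx₀ : x₀ ≠ 0) (hy₀ : y₀ ≠ 0)
    (hφ₀ : φ₀ = ((q : ℝ) * φx - (p : ℝ) * φy) / π) :
    (∃ τ : ℝ, x₀ * Real.sin (2 * π * p * τ + φx) = 0 ∧
              y₀ * Real.sin (2 * π * q * τ + φy) = 0) ↔
    ∃ m : ℤ, φ₀ = (m : ℝ) := by
  have hπ : (π : ℝ) ≠ 0 := Real.pi_ne_zero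
  have hp' : (p : ℝ) ≠ 0 := Nat.cast_ne_zero.mpr hp.ne'
  have hq' : (q : ℝ) ≠ 0 := Nat.cast_ne_zero.mpr hq.ne'
  constructor
  · rintro ⟨τ, hx, hy⟩
    have hx' : Real.sin (2 * π * p * τ + φx) = 0 := by
      rcases mul_eq_zero.mp hx with h | h
      · exact absurd h hx₀
      · exact h
    have hy' : Real.sin (2 * π * q * τ + φy) = 0 := by
      rcases mul_eq_zero.mp hy with h | h
      · exact absurd h hy₀
      · exact h
    rw [Real.sin_eq_zero_iff] at hx' hy'
    obtain ⟨k, hk⟩ := hx'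
    obtain ⟨l, hl⟩ := hy'
    refine ⟨k * q - l * p, ?_⟩
    rw [hφ₀, div_eq_iff hπ]
    push_cast
    linear_combination (p : ℝ) * hl - (q : ℝ) * hk
  · rintro ⟨m, hm⟩
    have hm' : (q : ℝ) * φx - (p : ℝ) * φy = (m : ℝ) * π := by
      rw [hφ₀, div_eq_iff hπ] at hm
      linarith [hm]
    -- Bezout
    have hgcd : (p : ℤ) * Int.gcdA p q + (q : ℤ) * Int.gcdB p q = 1 := by
      have := Int.gcd_eq_gcd_ab (p : ℤ) (q : ℤ)
      rw [Int.gcd_natCast_natCast, hpq] at this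
      exact_mod_cast this.symm
    set a := Int.gcdA p q
    set b := Int.gcdB p q
    set k : ℤ := m * b
    set l : ℤ := -(m * a)
    have hkl : k * q - l * p = m := by
      simp only [k, l]
      linear_combination m * hgcd
    refine ⟨(k * π - φx) / (2 * π * p), ?_, ?_⟩
    · have : 2 * π * p * ((k * π - φx) / (2 * π * p)) + φx = k * π := by
        field_simp
        ring
      rw [this]
      simp [Real.sin_int_mul_pi]
    · have hklR : (k : ℝ) * q - (l : ℝ) * p = (m : ℝ) := by exact_mod_cast hkl
      have : 2 * π * q * ((k * π - φx) / (2 * π * p)) + φy = l * π := by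
        field_simp
        linear_combination π * hklR - hm'
      rw [this]
      simp [Real.sin_int_mul_pi]
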